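/- Let f be a real binary form of degree n ≥ 3 such that every nontrivial real directional derivative α f_x + β f_y has n−1 distinct real roots. Then the Hessian determinant H(f) = f_xx f_yy − f_xy² never vanishes on ℝ² \ {(0,0)}. -/

import Mathlib

open MvPolynomial

/-- The real linear binary form `p.1 * x + p.2 * y`. -/
noncomputable def lin (p : ℝ × ℝ) : MvPolynomial (Fin 2) ℝ :=
  C p.1 * X 0 + C p.2 * X 1

/-- A binary form `f` has `m` distinct real roots: it factors over `ℝ` into `m`
pairwise non-proportional (nonzero) real linear forms, up to a nonzero constant. -/
noncomputable def HasDistinctRealRoots (f : MvPolynomial (Fin 2) ℝ) (m : ℕ) : Prop :=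
  ∃ (c : ℝ) (l : Fin m → ℝ × ℝ), c ≠ 0 ∧ (∀ i, l i ≠ 0) ∧
    (∀ i j, i ≠ j → (l i).1 * (l j).2 - (l j).1 * (l i).2 ≠ 0) ∧
    f = C c * ∏ i, lin (l i)
/-- The Hessian determinant `f_xx f_yy - f_xy ^ 2` of a binary form. -/
noncomputable def hess (f : MvPolynomial (Fin 2) ℝ) : MvPolynomial (Fin 2) ℝ :=
  pderiv 0 (pderiv 0 f) * pderiv 1 (pderiv 1 f) - (pderiv 0 (pderiv 1 f)) ^ 2

private lemma pd_comm (i j : Fin 2) (f : MvPolynomial (Fin 2) ℝ) :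
    pderiv i (pderiv j f) = pderiv j (pderiv i f) := by
  induction f using MvPolynomial.induction_on with
  | C a => simp
  | add p q hp hq => simp [hp, hq]
  | mul_X p k hp =>
    by_cases hki : k = i <;> by_cases hkj : k = j <;>
      subst_vars <;>
      simp [pderiv_mul, hp, Pi.single_eq_of_ne, *] <;> ring

private lemma euler {n : ℕ} {f : MvPolynomial (Fin 2) ℝ} (hf : f.IsHomogeneous n) :
    X 0 * pderiv 0 f + X 1 * pderiv 1 f = C (n : ℝ) * f := by
  conv_lhs => rw [f.as_sum]
  conv_rhs => rw [f.as_sum]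
  rw [map_sum, map_sum, Finset.mul_sum, Finset.mul_sum, Finset.mul_sum,
    ← Finset.sum_add_distrib]
  refine Finset.sum_congr rfl fun s hs => ?_
  have hdeg : s 0 + s 1 = n := by
    have h := hf (MvPolynomial.mem_support_iff.mp hs)
    rw [Finsupp.weight_apply] at h
    rw [← h, Finsupp.sum_fintype _ _ (by simp)]
    simp [Fin.sum_univ_two]
  set a := coeff s f with ha
  have key : ∀ i : Fin 2, (X i : MvPolynomial (Fin 2) ℝ) *
      monomial (s - Finsupp.single i 1) (a * s i) = monomial s (a * s i) := by
    intro i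
    rcases Nat.eq_zero_or_pos (s i) with h | h
    · simp [h]
    · rw [← pow_one (X i : MvPolynomial (Fin 2) ℝ), ← monomial_single_add,
        add_tsub_cancel_of_le (Finsupp.single_le_iff.mpr h)]
  rw [pderiv_monomial, pderiv_monomial, key 0, key 1, C_mul_monomial, ← map_add]
  congr 1
  push_cast [← hdeg]
  ring

private lemma lin_homog (p : ℝ × ℝ) : (lin p).IsHomogeneous 1 := by
  have h0 : (C p.1 * X 0 : MvPolynomial (Fin 2) ℝ).IsHomogeneous 1 := by
    simpa using (isHomogeneous_C _ p.1).mul (isHomogeneous_X _ 0)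
  have h1 : (C p.2 * X 1 : MvPolynomial (Fin 2) ℝ).IsHomogeneous 1 := by
    simpa using (isHomogeneous_C _ p.2).mul (isHomogeneous_X _ 1)
  exact h0.add h1

private lemma eval_lin (p : ℝ × ℝ) (x y : ℝ) :
    eval ![x, y] (lin p) = p.1 * x + p.2 * y := by
  simp [lin]

private lemma pderiv0_lin (p : ℝ × ℝ) : pderiv 0 (lin p) = C p.1 := by
  simp [lin]

private lemma pderiv1_lin (p : ℝ × ℝ) : pderiv 1 (lin p) = C p.2 := by
  simp [lin]

theorem stmt_12 (n : ℕ) (hn : 3 ≤ n) (f : MvPolynomial (Fin 2) ℝ)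
    (hhom : f.IsHomogeneous n)
    (hder : ∀ α β : ℝ, (α, β) ≠ (0, 0) →
      HasDistinctRealRoots (C α * pderiv 0 f + C β * pderiv 1 f) (n - 1)) :
    ∀ x y : ℝ, (x, y) ≠ (0, 0) → eval ![x, y] (hess f) ≠ 0 := by
  intro x y hxy hzero
  set v : Fin 2 → ℝ := ![x, y] with hv
  set a := eval v (pderiv 0 (pderiv 0 f)) with ha
  set b := eval v (pderiv 0 (pderiv 1 f)) with hb
  set cc := eval v (pderiv 1 (pderiv 1 f)) with hcc
  have hdet : a * cc - b ^ 2 = 0 := by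
    simpa [hess, ha, hb, hcc] using hzero
  obtain ⟨α, β, hab, h1, h2⟩ : ∃ α β : ℝ, (α, β) ≠ (0, 0) ∧
      α * a + β * b = 0 ∧ α * b + β * cc = 0 := by
    by_cases h : a = 0 ∧ b = 0
    · exact ⟨1, 0, by simp, by simp [h.1, h.2], by simp [h.2]⟩
    · refine ⟨b, -a, ?_, by ring, by nlinarith [hdet]⟩
      intro hcon
      apply h
      have h1 := congrArg Prod.fst hcon
      have h2 := congrArg Prod.snd hcon
      simp at h1 h2
      exact ⟨h2, h1⟩
  obtain ⟨c, l, hc, hl, hsep, hfac⟩ := hder α β hab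
  set g := C α * pderiv 0 f + C β * pderiv 1 f with hg
  -- evaluations of the gradient of g at v vanish
  have hgx : eval v (pderiv 0 g) = 0 := by
    rw [hg]
    simp only [map_add, pderiv_C_mul, map_mul, eval_C]
    rw [← ha, ← hb]
    exact h1
  have hgy : eval v (pderiv 1 g) = 0 := by
    rw [hg]
    simp only [map_add, pderiv_C_mul, map_mul, eval_C]
    rw [pd_comm 1 0 f, ← hb, ← hcc]
    exact h2
  -- g is homogeneous of degree n - 1
  have hghom : g.IsHomogeneous (n - 1) := by
    rw [hfac]
    have hprod : (∏ i : Fin (n-1), lin (l i)).IsHomogeneous (n - 1) := by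
      have := IsHomogeneous.prod Finset.univ (fun i => lin (l i)) (fun _ => 1)
        (fun i _ => lin_homog (l i))
      simpa using this
    simpa using (isHomogeneous_C _ c).mul hprod
  -- Euler: g vanishes at v
  have hgv : eval v g = 0 := by
    have he := congrArg (eval v) (euler hghom)
    simp only [map_add, map_mul, eval_C, eval_X] at he
    have hv0 : v 0 = x := rfl
    have hv1 : v 1 = y := rfl
    rw [hv0, hv1, hgx, hgy] at he
    have hn1 : ((n - 1 : ℕ) : ℝ) ≠ 0 := by
      have : 1 ≤ n - 1 := by omega
      positivity
    have h' : ((n - 1 : ℕ) : ℝ) * eval v g = 0 := by linarith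
    exact (mul_eq_zero.mp h').resolve_left hn1
  -- some linear factor vanishes at v
  have hprodv : eval v (∏ i : Fin (n-1), lin (l i)) = 0 := by
    rw [hfac] at hgv
    simp only [map_mul, eval_C] at hgv
    rcases mul_eq_zero.mp hgv with h | h
    · exact absurd h hc
    · exact h
  rw [map_prod] at hprodv
  obtain ⟨k, _, hk⟩ := Finset.prod_eq_zero_iff.mp hprodv
  -- other factors don't vanish at v
  have hother : ∀ j, j ≠ k → eval v (lin (l j)) ≠ 0 := by
    intro j hj hzj
    rw [eval_lin] at hk hzj
    have hd := hsep j k hj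
    have e1 : ((l j).1 * (l k).2 - (l k).1 * (l j).2) * x = 0 := by
      linear_combination (l k).2 * hzj - (l j).2 * hk
    have e2 : ((l j).1 * (l k).2 - (l k).1 * (l j).2) * y = 0 := by
      linear_combination (l j).1 * hk - (l k).1 * hzj
    have hx0 : x = 0 := (mul_eq_zero.mp e1).resolve_left hd
    have hy0 : y = 0 := (mul_eq_zero.mp e2).resolve_left hd
    exact hxy (by rw [hx0, hy0])
  have hQ : eval v (∏ i ∈ Finset.univ.erase k, lin (l i)) ≠ 0 := by
    rw [map_prod]
    exact Finset.prod_ne_zero_iff.mpr fun j hj => hother j (Finset.ne_of_mem_erase hj)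
  -- compute gradient of g via the factorization
  have hsplit : (∏ i : Fin (n-1), lin (l i)) =
      lin (l k) * ∏ i ∈ Finset.univ.erase k, lin (l i) :=
    (Finset.mul_prod_erase _ _ (Finset.mem_univ k)).symm
  set Q := ∏ i ∈ Finset.univ.erase k, lin (l i) with hQdef
  have hgfac : g = C c * (lin (l k) * Q) := by rw [hfac, hsplit]
  have hevalk : eval v (lin (l k)) = 0 := hk
  have hder0 : eval v (pderiv 0 g) = c * ((l k).1 * eval v Q) := by
    rw [hgfac, pderiv_C_mul, pderiv_mul, pderiv0_lin]
    simp only [map_mul, map_add, eval_C]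
    rw [hevalk]
    ring
  have hder1 : eval v (pderiv 1 g) = c * ((l k).2 * eval v Q) := by
    rw [hgfac, pderiv_C_mul, pderiv_mul, pderiv1_lin]
    simp only [map_mul, map_add, eval_C]
    rw [hevalk]
    ring
  have hk1 : (l k).1 = 0 := by
    have := hder0; rw [hgx] at this
    rcases mul_eq_zero.mp this.symm with h | h
    · exact absurd h hc
    · rcases mul_eq_zero.mp h with h' | h'
      · exact h'
      · exact absurd h' hQ
  have hk2 : (l k).2 = 0 := by
    have := hder1; rw [hgy] at this
    rcases mul_eq_zero.mp this.symm with h | h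
    · exact absurd h hc
    · rcases mul_eq_zero.mp h with h' | h'
      · exact h'
      · exact absurd h' hQ
  exact hl k (Prod.ext hk1 hk2)
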